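/- Convertibility of binder-headed types is componentwise: Qx:A.B ≃ Qx:A'.B' if and only if A ≃ A' and B ≃ B', for Q ∈ {Π, Σ}; in particular a Π-type is never convertible to a Σ-type or to a universe. -/

import Mathlib

namespace ECC

/-- Terms of Luo's Extended Calculus of Constructions, in de Bruijn representation. -/
inductive Term : Type
  | var   : ℕ → Term
  | prop  : Term
  | type  : ℕ → Term
  | pi    : Term → Term → Term
  | sigma : Term → Term → Term
  | lam   : Term → Term → Term
  | app   : Term → Term → Term
  | pair  : Term → Term → Term → Term   -- ⟨M, N⟩_B with type annotation B
  | proj1 : Term → Term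
  | proj2 : Term → Term
deriving DecidableEq

/-- Lift (shift by `d`) all de Bruijn indices ≥ `k`. -/
def lift (d : ℕ) : ℕ → Term → Term
  | k, .var n       => if n < k then .var n else .var (n + d)
  | _, .prop        => .prop
  | _, .type j      => .type j
  | k, .pi A B      => .pi (lift d k A) (lift d (k+1) B)
  | k, .sigma A B   => .sigma (lift d k A) (lift d (k+1) B)
  | k, .lam A M     => .lam (lift d k A) (lift d (k+1) M)
  | k, .app M N     => .app (lift d k M) (lift d k N)
  | k, .pair M N B  => .pair (lift d k M) (lift d k N) (lift d k B)
  | k, .proj1 M     => .proj1 (lift d k M)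
  | k, .proj2 M     => .proj2 (lift d k M)

/-- Capture-avoiding substitution `[N/x]A` of the term `N` for the variable `x` in `A`. -/
def subst (N : Term) : ℕ → Term → Term
  | k, .var n       => if n < k then .var n else if n = k then lift k 0 N else .var (n - 1)
  | _, .prop        => .prop
  | _, .type j      => .type j
  | k, .pi A B      => .pi (subst N k A) (subst N (k+1) B)
  | k, .sigma A B   => .sigma (subst N k A) (subst N (k+1) B)
  | k, .lam A M     => .lam (subst N k A) (subst N (k+1) M)
  | k, .app M M'    => .app (subst N k M) (subst N k M')
  | k, .pair M M' B => .pair (subst N k M) (subst N k M') (subst N k B)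
  | k, .proj1 M     => .proj1 (subst N k M)
  | k, .proj2 M     => .proj2 (subst N k M)

/-- `[N/x₀]B` : substitution for the outermost bound variable. -/
def subst0 (B N : Term) : Term := subst N 0 B

/-- One-step reduction (β together with the projection reductions, closed under all
term-formation congruences). -/
inductive Red : Term → Term → Prop
  | beta    : Red (.app (.lam A M) N) (subst0 M N)
  | pr1     : Red (.proj1 (.pair M N B)) M
  | pr2     : Red (.proj2 (.pair M N B)) N
  | piL     : Red A A' → Red (.pi A B) (.pi A' B)
  | piR     : Red B B' → Red (.pi A B) (.pi A B')
  | sigmaL  : Red A A' → Red (.sigma A B) (.sigma A' B)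
  | sigmaR  : Red B B' → Red (.sigma A B) (.sigma A B')
  | lamL    : Red A A' → Red (.lam A M) (.lam A' M)
  | lamR    : Red M M' → Red (.lam A M) (.lam A M')
  | appL    : Red M M' → Red (.app M N) (.app M' N)
  | appR    : Red N N' → Red (.app M N) (.app M N')
  | pairL   : Red M M' → Red (.pair M N B) (.pair M' N B)
  | pairR   : Red N N' → Red (.pair M N B) (.pair M N' B)
  | pairB   : Red B B' → Red (.pair M N B) (.pair M N B')
  | proj1C  : Red M M' → Red (.proj1 M) (.proj1 M')
  | proj2C  : Red M M' → Red (.proj2 M) (.proj2 M')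

/-- Conversion `≃` : the equivalence relation generated by reduction. -/
def Conv : Term → Term → Prop := Relation.EqvGen Red

/-- `A` has a normal form. -/
def HasNF (A : Term) : Prop :=
  ∃ B, Relation.ReflTransGen Red A B ∧ ∀ C, ¬ Red B C

/-- `𝒯` : the set of normalisable terms. -/
def Tset : Set Term := {A | HasNF A}

/-- Universes are `Prop` and the `Type_j`. -/
def IsUniv (T : Term) : Prop := T = .prop ∨ ∃ j, T = .type j

/-- The cumulativity relation `⪯` : the smallest preorder containing conversion,
the universe order, congruence for Π in the codomain, and congruence for Σ in both
components. -/
inductive Cum : Term → Term → Prop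
  | conv     : Conv A B → Cum A B
  | propType : Cum .prop (.type 0)
  | typeType : j ≤ k → Cum (.type j) (.type k)
  | pi       : Conv A A' → Cum B B' → Cum (.pi A B) (.pi A' B')
  | sigma    : Cum A A' → Cum B B' → Cum (.sigma A B) (.sigma A' B')
  | trans    : Cum A B → Cum B C → Cum A C

/-- The strict cumulativity relation `≺` : `A ⪯ B` and `A ≄ B`. -/
def SCum (A B : Term) : Prop := Cum A B ∧ ¬ Conv A B

/-- The stratified cumulativity relations `⪯ᵢ`. -/
inductive CumL : ℕ → Term → Term → Prop
  | conv     : Conv A B → CumL i A B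
  | propType : CumL i .prop (.type j)
  | typeType : j < k → CumL i (.type j) (.type k)
  | succ     : CumL i A B → CumL (i+1) A B
  | pi       : Conv M (.pi A B) → Conv N (.pi A' B') → Conv A A' → CumL i B B' →
               CumL (i+1) M N
  | sigma    : Conv M (.sigma A B) → Conv N (.sigma A' B') → CumL i A A' → CumL i B B' →
               CumL (i+1) M N

/-- Strict stratified cumulativity `≺ᵢ`. -/
def SCumL (i : ℕ) (A B : Term) : Prop := CumL i A B ∧ ¬ Conv A B

/-- Is the outermost symbol of a term Π or Σ? -/
def BinderHeaded : Term → Prop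
  | .pi _ _    => True
  | .sigma _ _ => True
  | _          => False

/-- The base stratum: normalisable terms not convertible to a binder-headed
normalisable term. -/
def Base : Set Term :=
  {T | HasNF T ∧ ¬ ∃ B, HasNF B ∧ BinderHeaded B ∧ Conv T B}

/-- The stratification `(Π_n, Σ_n)` of `𝒯`. -/
def Strata : ℕ → Set Term × Set Term
  | 0 => (Base, Base)
  | n+1 =>
    ({T | ∃ k l, ∃ _ : k + l = n, ∃ A B, HasNF (Term.pi A B) ∧ Conv T (Term.pi A B) ∧
        A ∈ (Strata k).1 ∪ (Strata k).2 ∧ B ∈ (Strata l).1 ∪ (Strata l).2},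
     {T | ∃ k l, ∃ _ : k + l = n, ∃ A B, HasNF (Term.sigma A B) ∧ Conv T (Term.sigma A B) ∧
        A ∈ (Strata k).1 ∪ (Strata k).2 ∧ B ∈ (Strata l).1 ∪ (Strata l).2})
termination_by n => n
decreasing_by all_goals omega

/-- The stratum `Π_n`. -/
def PiStr (n : ℕ) : Set Term := (Strata n).1

/-- The stratum `Σ_n`. -/
def SigStr (n : ℕ) : Set Term := (Strata n).2

/-- The specification of the rank function `φ : 𝒯 → ω`. -/
def PhiSpec (φ : Term → ℕ) : Prop :=
  (∀ M N, HasNF M → HasNF N → Conv M N → φ M = φ N) ∧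
  (∀ T, HasNF T → Conv T .prop → φ T = 2) ∧
  (∀ T j, HasNF T → Conv T (.type j) → φ T = 3 + j) ∧
  (∀ T, T ∈ PiStr 0 → ¬ Conv T .prop → (∀ j, ¬ Conv T (.type j)) → φ T = 1) ∧
  (∀ T A B, HasNF T → (Conv T (.pi A B) ∨ Conv T (.sigma A B)) → φ T = φ A * φ B) ∧
  (∀ T, HasNF T → 0 < φ T)

mutual
/-- Valid contexts of ECC (de Bruijn: the head of the list is the most recent entry). -/
inductive Valid : List Term → Prop
  | nil  : Valid []
  | cons : Typing Γ A (.type j) → Valid (A :: Γ)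

/-- The typing judgement `Γ ⊢ M : A` of ECC. -/
inductive Typing : List Term → Term → Term → Prop
  | prop  : Valid Γ → Typing Γ .prop (.type 0)
  | type  : Valid Γ → Typing Γ (.type j) (.type (j+1))
  | var   : Valid Γ → Γ[n]? = some A → Typing Γ (.var n) (lift (n+1) 0 A)
  | pi1   : Typing Γ A (.type j) → Typing (A :: Γ) B .prop →
            Typing Γ (.pi A B) .prop
  | pi2   : Typing Γ A (.type j) → Typing (A :: Γ) B (.type j) →
            Typing Γ (.pi A B) (.type j)
  | sig   : Typing Γ A (.type j) → Typing (A :: Γ) B (.type j) →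
            Typing Γ (.sigma A B) (.type j)
  | lam   : Typing (A :: Γ) M B → Typing Γ (.lam A M) (.pi A B)
  | app   : Typing Γ M (.pi A B) → Typing Γ N A → Typing Γ (.app M N) (subst0 B N)
  | pair  : Typing Γ M A → Typing Γ N (subst0 B M) → Typing (A :: Γ) B (.type j) →
            Typing Γ (.pair M N (.sigma A B)) (.sigma A B)
  | proj1 : Typing Γ M (.sigma A B) → Typing Γ (.proj1 M) A
  | proj2 : Typing Γ M (.sigma A B) → Typing Γ (.proj2 M) (subst0 B (.proj1 M))
  | cum   : Typing Γ M A → Typing Γ B (.type j) → Cum A B → Typing Γ M B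
end

/-- `Type_j` for `j ∈ ℤ`, with the convention `Type_{-1} = Prop`. -/
def TType (j : ℤ) : Term := if j < 0 then .prop else .type j.toNat

/-- The typing judgement of the restricted system `ECC⁻`: the rules
`(Π2)(Σ)(app)(pair)(⪯)` of ECC are replaced by `(Π2')(Σ')(app')(pair')` and `(≃)_ρ`. -/
inductive TypingM : List Term → Term → Term → Prop
  | prop  : Valid Γ → TypingM Γ .prop (.type 0)
  | type  : Valid Γ → TypingM Γ (.type j) (.type (j+1))
  | var   : Valid Γ → Γ[n]? = some A → TypingM Γ (.var n) (lift (n+1) 0 A)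
  | pi1   : TypingM Γ A (.type j) → TypingM (A :: Γ) B .prop →
            TypingM Γ (.pi A B) .prop
  | pi2'  : TypingM Γ A (TType j) → TypingM (A :: Γ) B (TType k) → 0 ≤ k →
            TypingM Γ (.pi A B) (TType (max (max j k) 0))
  | sig'  : TypingM Γ A (TType j) → TypingM (A :: Γ) B (TType k) →
            TypingM Γ (.sigma A B) (TType (max (max j k) 0))
  | lam   : TypingM (A :: Γ) M B → TypingM Γ (.lam A M) (.pi A B)
  | app'  : TypingM Γ M (.pi A B) → TypingM Γ N A' → Cum A' A →
            TypingM Γ (.app M N) (subst0 B N)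
  | pair' : TypingM Γ M A → TypingM Γ N C → TypingM (A' :: Γ) B' (.type j) →
            Cum A A' → Cum C (subst0 B' M) →
            TypingM Γ (.pair M N (.sigma A' B')) (.sigma A' B')
  | proj1 : TypingM Γ M (.sigma A B) → TypingM Γ (.proj1 M) A
  | proj2 : TypingM Γ M (.sigma A B) → TypingM Γ (.proj2 M) (subst0 B (.proj1 M))
  | conv  : TypingM Γ M A → Conv A A' → Typing Γ A' (.type j) → TypingM Γ M A'




theorem lift_lift (M : Term) : ∀ i j d d', j ≤ i →
    lift d (i + d') (lift d' j M) = lift d' j (lift d i M) := by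
  induction M with
  | var n =>
      intro i j d d' h
      simp only [lift]
      by_cases h1 : n < j
      · simp [lift, h1, show n < i by omega, show n < i + d' by omega]
      · by_cases h2 : n < i
        · simp [lift, h1, h2, show n + d' < i + d' by omega]
        · simp [lift, h1, h2, show ¬ n + d' < i + d' by omega, show ¬ n + d < j by omega]
          omega
  | prop => intros; rfl
  | type => intros; rfl
  | pi A B ihA ihB =>
      intro i j d d' h
      simp only [lift, ihA i j d d' h]
      have := ihB (i+1) (j+1) d d' (by omega)
      rw [show i + 1 + d' = i + d' + 1  by omega] at this
      rw [this]
  | sigma A B ihA ihB =>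
      intro i j d d' h
      simp only [lift, ihA i j d d' h]
      have := ihB (i+1) (j+1) d d' (by omega)
      rw [show i + 1 + d' = i + d' + 1  by omega] at this
      rw [this]
  | lam A B ihA ihB =>
      intro i j d d' h
      simp only [lift, ihA i j d d' h]
      have := ihB (i+1) (j+1) d d' (by omega)
      rw [show i + 1 + d' = i + d' + 1  by omega] at this
      rw [this]
  | app M N ihM ihN => intro i j d d' h; simp only [lift, ihM i j d d' h, ihN i j d d' h]
  | pair M N B ihM ihN ihB =>
      intro i j d d' h
      simp only [lift, ihM i j d d' h, ihN i j d d' h, ihB i j d d' h]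
  | proj1 M ih => intro i j d d' h; simp only [lift, ih i j d d' h]
  | proj2 M ih => intro i j d d' h; simp only [lift, ih i j d d' h]

theorem lift_lift_merge (M : Term) : ∀ j i d d', j ≤ i → i ≤ j + d' →
    lift d i (lift d' j M) = lift (d + d') j M := by
  induction M with
  | var n =>
      intro j i d d' h1 h2
      by_cases hn : n < j
      · simp [lift, hn, show n < i by omega]
      · simp [lift, hn, show ¬ n + d' < i by omega]
        omega
  | prop => intros; rfl
  | type => intros; rfl
  | pi A B ihA ihB =>
      intro j i d d' h1 h2
      simp only [lift, ihA j i d d' h1 h2, ihB (j+1) (i+1) d d' (by omega) (by omega)]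
  | sigma A B ihA ihB =>
      intro j i d d' h1 h2
      simp only [lift, ihA j i d d' h1 h2, ihB (j+1) (i+1) d d' (by omega) (by omega)]
  | lam A B ihA ihB =>
      intro j i d d' h1 h2
      simp only [lift, ihA j i d d' h1 h2, ihB (j+1) (i+1) d d' (by omega) (by omega)]
  | app M N ihM ihN =>
      intro j i d d' h1 h2
      simp only [lift, ihM j i d d' h1 h2, ihN j i d d' h1 h2]
  | pair M N B ihM ihN ihB =>
      intro j i d d' h1 h2
      simp only [lift, ihM j i d d' h1 h2, ihN j i d d' h1 h2, ihB j i d d' h1 h2]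
  | proj1 M ih => intro j i d d' h1 h2; simp only [lift, ih j i d d' h1 h2]
  | proj2 M ih => intro j i d d' h1 h2; simp only [lift, ih j i d d' h1 h2]

theorem subst_lift_cancel (M : Term) : ∀ j i d N, j ≤ i → i < j + d →
    subst N i (lift d j M) = lift (d-1) j M := by
  induction M with
  | var n =>
      intro j i d N h1 h2
      by_cases hn : n < j
      · simp [lift, subst, hn, show n < i by omega]
      · simp [lift, subst, hn, show ¬ n + d < i by omega, show ¬ n + d = i by omega]
        omega
  | prop => intros; rfl
  | type => intros; rfl
  | pi A B ihA ihB =>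
      intro j i d N h1 h2
      simp only [lift, subst, ihA j i d N h1 h2, ihB (j+1) (i+1) d N (by omega) (by omega)]
  | sigma A B ihA ihB =>
      intro j i d N h1 h2
      simp only [lift, subst, ihA j i d N h1 h2, ihB (j+1) (i+1) d N (by omega) (by omega)]
  | lam A B ihA ihB =>
      intro j i d N h1 h2
      simp only [lift, subst, ihA j i d N h1 h2, ihB (j+1) (i+1) d N (by omega) (by omega)]
  | app M N ihM ihN =>
      intro j i d N' h1 h2
      simp only [lift, subst, ihM j i d N' h1 h2, ihN j i d N' h1 h2]
  | pair M N B ihM ihN ihB =>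
      intro j i d N' h1 h2
      simp only [lift, subst, ihM j i d N' h1 h2, ihN j i d N' h1 h2, ihB j i d N' h1 h2]
  | proj1 M ih => intro j i d N h1 h2; simp only [lift, subst, ih j i d N h1 h2]
  | proj2 M ih => intro j i d N h1 h2; simp only [lift, subst, ih j i d N h1 h2]

theorem subst_lift_comm (P : Term) : ∀ i j k N, i + j ≤ k →
    subst N k (lift j i P) = lift j i (subst N (k - j) P) := by
  induction P with
  | var n =>
      intro i j k N h
      by_cases hn : n < i
      · simp [lift, subst, hn, show n < k by omega, show n < k - j by omega]
      · by_cases h1 : n < k - j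
        · simp [lift, subst, hn, h1, show n + j < k by omega]
        · by_cases h2 : n = k - j
          · have e1 : n + j = k := by omega
            simp only [lift, if_neg hn, e1, subst, if_neg (show ¬ k < k by omega),
              if_pos rfl, if_neg h1, if_pos h2]
            rw [lift_lift_merge N 0 i j (k - j) (by omega) (by omega),
              show j + (k - j) = k by omega]
            simp
          · simp [lift, subst, hn, h1, h2, show ¬ n + j < k by omega,
              show ¬ n + j = k by omega, show ¬ n - 1 < i by omega]
            omega
  | prop => intros; rfl
  | type => intros; rfl
  | pi A B ihA ihB =>
      intro i j k N h
      simp only [lift, subst, ihA i j k N h]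
      have := ihB (i+1) j (k+1) N (by omega)
      rw [show k + 1 - j = k - j + 1 by omega] at this
      rw [this]
  | sigma A B ihA ihB =>
      intro i j k N h
      simp only [lift, subst, ihA i j k N h]
      have := ihB (i+1) j (k+1) N (by omega)
      rw [show k + 1 - j = k - j + 1 by omega] at this
      rw [this]
  | lam A B ihA ihB =>
      intro i j k N h
      simp only [lift, subst, ihA i j k N h]
      have := ihB (i+1) j (k+1) N (by omega)
      rw [show k + 1 - j = k - j + 1 by omega] at this
      rw [this]
  | app M N ihM ihN =>
      intro i j k N' h
      simp only [lift, subst, ihM i j k N' h, ihN i j k N' h]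
  | pair M N B ihM ihN ihB =>
      intro i j k N' h
      simp only [lift, subst, ihM i j k N' h, ihN i j k N' h, ihB i j k N' h]
  | proj1 M ih => intro i j k N h; simp only [lift, subst, ih i j k N h]
  | proj2 M ih => intro i j k N h; simp only [lift, subst, ih i j k N h]

theorem lift_subst (M : Term) : ∀ j k d N, j ≤ k →
    lift d k (subst N j M) = subst (lift d (k - j) N) j (lift d (k+1) M) := by
  induction M with
  | var n =>
      intro j k d N h
      by_cases h1 : n < j
      · simp [lift, subst, h1, show n < k by omega, show n < k + 1 by omega]
      · by_cases h2 : n = j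
        · subst h2
          simp only [subst, lift, if_neg (show ¬ n < n by omega), if_pos rfl,
            if_pos (show n < k + 1 by omega)]
          have := lift_lift N (k - n) 0 d n (by omega)
          rw [show k - n + n = k by omega] at this
          exact this
        · by_cases h3 : n - 1 < k
          · simp [lift, subst, h1, h2, h3, show n < k + 1 by omega]
          · simp [lift, subst, h1, h2, h3, show ¬ n < k + 1 by omega,
              show ¬ n + d < j by omega, show ¬ n + d = j by omega,
              show ¬ n - 1 < k by omega]
            omega
  | prop => intros; rfl
  | type => intros; rfl
  | pi A B ihA ihB =>
      intro j k d N h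
      simp only [lift, subst, ihA j k d N h]
      have := ihB (j+1) (k+1) d N (by omega)
      rw [show k + 1 - (j + 1) = k - j by omega] at this
      rw [this]
  | sigma A B ihA ihB =>
      intro j k d N h
      simp only [lift, subst, ihA j k d N h]
      have := ihB (j+1) (k+1) d N (by omega)
      rw [show k + 1 - (j + 1) = k - j by omega] at this
      rw [this]
  | lam A B ihA ihB =>
      intro j k d N h
      simp only [lift, subst, ihA j k d N h]
      have := ihB (j+1) (k+1) d N (by omega)
      rw [show k + 1 - (j + 1) = k - j by omega] at this
      rw [this]
  | app M N ihM ihN =>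
      intro j k d N' h
      simp only [lift, subst, ihM j k d N' h, ihN j k d N' h]
  | pair M N B ihM ihN ihB =>
      intro j k d N' h
      simp only [lift, subst, ihM j k d N' h, ihN j k d N' h, ihB j k d N' h]
  | proj1 M ih => intro j k d N h; simp only [lift, subst, ih j k d N h]
  | proj2 M ih => intro j k d N h; simp only [lift, subst, ih j k d N h]

theorem subst_subst (M : Term) : ∀ j k N P, j ≤ k →
    subst N k (subst P j M) = subst (subst N (k - j) P) j (subst N (k+1) M) := by
  induction M with
  | var n =>
      intro j k N P h
      by_cases h1 : n < j
      · simp [subst, h1, show n < k by omega, show n < k + 1 by omega]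
      · by_cases h2 : n = j
        · subst h2
          simp only [subst, lift, if_neg (show ¬ n < n by omega), if_pos rfl,
            if_pos (show n < k + 1 by omega)]
          exact subst_lift_comm P 0 n k N (by omega)
        · by_cases h3 : n - 1 < k
          · simp [subst, h1, h2, h3, show n < k + 1 by omega, show ¬ n - 1 = k by omega]
          · by_cases h4 : n - 1 = k
            · have hn : n = k + 1 := by omega
              subst hn
              simp only [subst, if_neg (show ¬ k + 1 < k + 1 by omega), if_pos rfl,
                if_neg (show ¬ k + 1 - 1 < k by omega), if_pos (show k + 1 - 1 = k by omega),
                if_neg h1, if_neg h2, if_true]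
              have := subst_lift_cancel N 0 j (k+1) (subst N (k - j) P) (by omega) (by omega)
              rw [show k + 1 - 1 = k by omega] at this
              exact this.symm
            · simp [subst, h1, h2, h3, h4, show ¬ n < k + 1 by omega,
                show ¬ n = k + 1 by omega,
                show ¬ n - 1 < j by omega, show ¬ n - 1 = j by omega]
  | prop => intros; rfl
  | type => intros; rfl
  | pi A B ihA ihB =>
      intro j k N P h
      simp only [subst, ihA j k N P h]
      have := ihB (j+1) (k+1) N P (by omega)
      rw [show k + 1 - (j + 1) = k - j by omega] at this
      rw [this]
  | sigma A B ihA ihB =>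
      intro j k N P h
      simp only [subst, ihA j k N P h]
      have := ihB (j+1) (k+1) N P (by omega)
      rw [show k + 1 - (j + 1) = k - j by omega] at this
      rw [this]
  | lam A B ihA ihB =>
      intro j k N P h
      simp only [subst, ihA j k N P h]
      have := ihB (j+1) (k+1) N P (by omega)
      rw [show k + 1 - (j + 1) = k - j by omega] at this
      rw [this]
  | app M N ihM ihN =>
      intro j k N' P h
      simp only [subst, ihM j k N' P h, ihN j k N' P h]
  | pair M N B ihM ihN ihB =>
      intro j k N' P h
      simp only [subst, ihM j k N' P h, ihN j k N' P h, ihB j k N' P h]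
  | proj1 M ih => intro j k N P h; simp only [subst, ih j k N P h]
  | proj2 M ih => intro j k N P h; simp only [subst, ih j k N P h]
/-- Parallel reduction. -/
inductive Par : Term → Term → Prop
  | var   : Par (.var n) (.var n)
  | prop  : Par .prop .prop
  | type  : Par (.type j) (.type j)
  | pi    : Par A A' → Par B B' → Par (.pi A B) (.pi A' B')
  | sigma : Par A A' → Par B B' → Par (.sigma A B) (.sigma A' B')
  | lam   : Par A A' → Par M M' → Par (.lam A M) (.lam A' M')
  | app   : Par M M' → Par N N' → Par (.app M N) (.app M' N')
  | pair  : Par M M' → Par N N' → Par B B' → Par (.pair M N B) (.pair M' N' B')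
  | proj1 : Par M M' → Par (.proj1 M) (.proj1 M')
  | proj2 : Par M M' → Par (.proj2 M) (.proj2 M')
  | beta  : Par M M' → Par N N' → Par (.app (.lam A M) N) (subst0 M' N')
  | pr1   : Par M M' → Par (.proj1 (.pair M N B)) M'
  | pr2   : Par N N' → Par (.proj2 (.pair M N B)) N'

theorem Par.refl : ∀ M : Term, Par M M := by
  intro M
  induction M with
  | var n => exact .var
  | prop => exact .prop
  | type j => exact .type
  | pi A B ihA ihB => exact .pi ihA ihB
  | sigma A B ihA ihB => exact .sigma ihA ihB
  | lam A B ihA ihB => exact .lam ihA ihB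
  | app M N ihM ihN => exact .app ihM ihN
  | pair M N B ihM ihN ihB => exact .pair ihM ihN ihB
  | proj1 M ih => exact .proj1 ih
  | proj2 M ih => exact .proj2 ih

theorem red_par : Red M N → Par M N := by
  intro h
  induction h with
  | beta => exact .beta (Par.refl _) (Par.refl _)
  | pr1 => exact .pr1 (Par.refl _)
  | pr2 => exact .pr2 (Par.refl _)
  | piL _ ih => exact .pi ih (Par.refl _)
  | piR _ ih => exact .pi (Par.refl _) ih
  | sigmaL _ ih => exact .sigma ih (Par.refl _)
  | sigmaR _ ih => exact .sigma (Par.refl _) ih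
  | lamL _ ih => exact .lam ih (Par.refl _)
  | lamR _ ih => exact .lam (Par.refl _) ih
  | appL _ ih => exact .app ih (Par.refl _)
  | appR _ ih => exact .app (Par.refl _) ih
  | pairL _ ih => exact .pair ih (Par.refl _) (Par.refl _)
  | pairR _ ih => exact .pair (Par.refl _) ih (Par.refl _)
  | pairB _ ih => exact .pair (Par.refl _) (Par.refl _) ih
  | proj1C _ ih => exact .proj1 ih
  | proj2C _ ih => exact .proj2 ih

abbrev MRed := Relation.ReflTransGen Red

theorem mred_pi (h1 : MRed A A') (h2 : MRed B B') : MRed (Term.pi A B) (.pi A' B') := by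
  refine Relation.ReflTransGen.trans (b := Term.pi A' B) ?_ ?_
  · exact Relation.ReflTransGen.lift (p := Red) (fun X => Term.pi X B) (fun _ _ h => Red.piL h) _ _ h1
  · exact Relation.ReflTransGen.lift (p := Red) (fun X => Term.pi A' X) (fun _ _ h => Red.piR h) _ _ h2

theorem mred_sigma (h1 : MRed A A') (h2 : MRed B B') :
    MRed (Term.sigma A B) (.sigma A' B') := by
  refine Relation.ReflTransGen.trans (b := Term.sigma A' B) ?_ ?_
  · exact Relation.ReflTransGen.lift (p := Red) (fun X => Term.sigma X B) (fun _ _ h => Red.sigmaL h) _ _ h1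
  · exact Relation.ReflTransGen.lift (p := Red) (fun X => Term.sigma A' X) (fun _ _ h => Red.sigmaR h) _ _ h2

theorem mred_lam (h1 : MRed A A') (h2 : MRed M M') : MRed (Term.lam A M) (.lam A' M') := by
  refine Relation.ReflTransGen.trans (b := Term.lam A' M) ?_ ?_
  · exact Relation.ReflTransGen.lift (p := Red) (fun X => Term.lam X M) (fun _ _ h => Red.lamL h) _ _ h1
  · exact Relation.ReflTransGen.lift (p := Red) (fun X => Term.lam A' X) (fun _ _ h => Red.lamR h) _ _ h2

theorem mred_app (h1 : MRed M M') (h2 : MRed N N') : MRed (Term.app M N) (.app M' N') := by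
  refine Relation.ReflTransGen.trans (b := Term.app M' N) ?_ ?_
  · exact Relation.ReflTransGen.lift (p := Red) (fun X => Term.app X N) (fun _ _ h => Red.appL h) _ _ h1
  · exact Relation.ReflTransGen.lift (p := Red) (fun X => Term.app M' X) (fun _ _ h => Red.appR h) _ _ h2

theorem mred_pair (h1 : MRed M M') (h2 : MRed N N') (h3 : MRed B B') :
    MRed (Term.pair M N B) (.pair M' N' B') := by
  refine Relation.ReflTransGen.trans (b := Term.pair M' N B) ?_
    (Relation.ReflTransGen.trans (b := Term.pair M' N' B) ?_ ?_)
  · exact Relation.ReflTransGen.lift (p := Red) (fun X => Term.pair X N B) (fun _ _ h => Red.pairL h) _ _ h1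
  · exact Relation.ReflTransGen.lift (p := Red) (fun X => Term.pair M' X B) (fun _ _ h => Red.pairR h) _ _ h2
  · exact Relation.ReflTransGen.lift (p := Red) (fun X => Term.pair M' N' X) (fun _ _ h => Red.pairB h) _ _ h3

theorem mred_proj1 (h : MRed M M') : MRed (Term.proj1 M) (.proj1 M') :=
  Relation.ReflTransGen.lift (p := Red) Term.proj1 (fun _ _ h => Red.proj1C h) _ _ h

theorem mred_proj2 (h : MRed M M') : MRed (Term.proj2 M) (.proj2 M') :=
  Relation.ReflTransGen.lift (p := Red) Term.proj2 (fun _ _ h => Red.proj2C h) _ _ h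

theorem par_mred : Par M N → MRed M N := by
  intro h
  induction h with
  | var => exact .refl
  | prop => exact .refl
  | type => exact .refl
  | pi _ _ ihA ihB => exact mred_pi ihA ihB
  | sigma _ _ ihA ihB => exact mred_sigma ihA ihB
  | lam _ _ ihA ihB => exact mred_lam ihA ihB
  | app _ _ ihM ihN => exact mred_app ihM ihN
  | pair _ _ _ ihM ihN ihB => exact mred_pair ihM ihN ihB
  | proj1 _ ih => exact mred_proj1 ih
  | proj2 _ ih => exact mred_proj2 ih
  | @beta M M' N N' A _ _ ihM ihN =>
      exact (mred_app (mred_lam .refl ihM) ihN).tail Red.beta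
  | @pr1 M M' N B _ ihM => exact (mred_proj1 (mred_pair ihM .refl .refl)).tail Red.pr1
  | @pr2 N N' M B _ ihN => exact (mred_proj2 (mred_pair .refl ihN .refl)).tail Red.pr2

theorem par_lift : Par M M' → ∀ d k, Par (lift d k M) (lift d k M') := by
  intro h
  induction h with
  | var => intro d k; simp only [lift]; split <;> exact .var
  | prop => intro d k; exact .prop
  | type => intro d k; exact .type
  | pi _ _ ihA ihB => intro d k; exact .pi (ihA d k) (ihB d (k+1))
  | sigma _ _ ihA ihB => intro d k; exact .sigma (ihA d k) (ihB d (k+1))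
  | lam _ _ ihA ihB => intro d k; exact .lam (ihA d k) (ihB d (k+1))
  | app _ _ ihM ihN => intro d k; exact .app (ihM d k) (ihN d k)
  | pair _ _ _ ihM ihN ihB => intro d k; exact .pair (ihM d k) (ihN d k) (ihB d k)
  | proj1 _ ih => intro d k; exact .proj1 (ih d k)
  | proj2 _ ih => intro d k; exact .proj2 (ih d k)
  | @beta M M' N N' A _ _ ihM ihN =>
      intro d k
      have : lift d k (subst0 M' N') = subst0 (lift d (k+1) M') (lift d k N') := by
        have := lift_subst M' 0 k d N' (by omega)
        simpa [subst0] using this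
      rw [show lift d k (Term.app (.lam A M) N) =
        Term.app (.lam (lift d k A) (lift d (k+1) M)) (lift d k N) from rfl, this]
      exact .beta (ihM d (k+1)) (ihN d k)
  | pr1 _ ih => intro d k; exact .pr1 (ih d k)
  | pr2 _ ih => intro d k; exact .pr2 (ih d k)

theorem par_subst (hN : Par N N') : Par M M' → ∀ k, Par (subst N k M) (subst N' k M') := by
  intro h
  induction h with
  | @var n =>
      intro k
      simp only [subst]
      by_cases h1 : n < k
      · simp [h1]; exact .var
      · by_cases h2 : n = k
        · simp [h1, h2]; exact par_lift hN k 0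
        · simp [h1, h2]; exact .var
  | prop => intro k; exact .prop
  | type => intro k; exact .type
  | pi _ _ ihA ihB => intro k; exact .pi (ihA k) (ihB (k+1))
  | sigma _ _ ihA ihB => intro k; exact .sigma (ihA k) (ihB (k+1))
  | lam _ _ ihA ihB => intro k; exact .lam (ihA k) (ihB (k+1))
  | app _ _ ihM ihN => intro k; exact .app (ihM k) (ihN k)
  | pair _ _ _ ihM ihN ihB => intro k; exact .pair (ihM k) (ihN k) (ihB k)
  | proj1 _ ih => intro k; exact .proj1 (ih k)
  | proj2 _ ih => intro k; exact .proj2 (ih k)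
  | @beta M M' P P' A _ _ ihM ihP =>
      intro k
      have e : subst N' k (subst0 M' P') = subst0 (subst N' (k+1) M') (subst N' k P') := by
        have := subst_subst M' 0 k N' P' (by omega)
        simpa [subst0] using this
      rw [show subst N k (Term.app (.lam A M) P) =
        Term.app (.lam (subst N k A) (subst N (k+1) M)) (subst N k P) from rfl, e]
      exact .beta (ihM (k+1)) (ihP k)
  | pr1 _ ih => intro k; exact .pr1 (ih k)
  | pr2 _ ih => intro k; exact .pr2 (ih k)

theorem par_subst0 (hM : Par M M') (hN : Par N N') : Par (subst0 M N) (subst0 M' N') :=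
  par_subst hN hM 0
/-- Complete development (Takahashi's full superdevelopment). -/
def cd : Term → Term
  | .app (.lam _ M) N => subst0 (cd M) (cd N)
  | .proj1 (.pair M _ _) => cd M
  | .proj2 (.pair _ N _) => cd N
  | .var n => .var n
  | .prop => .prop
  | .type j => .type j
  | .pi A B => .pi (cd A) (cd B)
  | .sigma A B => .sigma (cd A) (cd B)
  | .lam A M => .lam (cd A) (cd M)
  | .app M N => .app (cd M) (cd N)
  | .pair M N B => .pair (cd M) (cd N) (cd B)
  | .proj1 M => .proj1 (cd M)
  | .proj2 M => .proj2 (cd M)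

theorem triangle : Par M N → Par N (cd M) := by
  intro h
  induction h with
  | var => simp only [cd]; exact .var
  | prop => simp only [cd]; exact .prop
  | type => simp only [cd]; exact .type
  | pi _ _ ihA ihB => simp only [cd]; exact .pi ihA ihB
  | sigma _ _ ihA ihB => simp only [cd]; exact .sigma ihA ihB
  | lam _ _ ihA ihB => simp only [cd]; exact .lam ihA ihB
  | pair _ _ _ ihM ihN ihB => simp only [cd]; exact .pair ihM ihN ihB
  | @app M M' N N' hM hN ihM ihN =>
      cases M with
      | lam A R =>
          cases hM with
          | lam hA hR =>
              simp only [cd] at ihM ⊢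
              cases ihM with
              | lam ihA' ihR' => exact .beta ihR' ihN
      | var n => simp only [cd]; exact .app ihM ihN
      | prop => simp only [cd]; exact .app ihM ihN
      | type j => simp only [cd]; exact .app ihM ihN
      | pi A B => simp only [cd]; exact .app ihM ihN
      | sigma A B => simp only [cd]; exact .app ihM ihN
      | app P Q => simp only [cd]; exact .app ihM ihN
      | pair P Q B => simp only [cd]; exact .app ihM ihN
      | proj1 P => simp only [cd]; exact .app ihM ihN
      | proj2 P => simp only [cd]; exact .app ihM ihN
  | @proj1 M M' hM ihM =>
      cases M with
      | pair P Q B =>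
          cases hM with
          | pair hP hQ hB =>
              simp only [cd] at ihM ⊢
              cases ihM with
              | pair ihP ihQ ihB => exact .pr1 ihP
      | var n => simp only [cd]; exact .proj1 ihM
      | prop => simp only [cd]; exact .proj1 ihM
      | type j => simp only [cd]; exact .proj1 ihM
      | pi A B => simp only [cd]; exact .proj1 ihM
      | sigma A B => simp only [cd]; exact .proj1 ihM
      | lam A R => simp only [cd]; exact .proj1 ihM
      | app P Q => simp only [cd]; exact .proj1 ihM
      | proj1 P => simp only [cd]; exact .proj1 ihM
      | proj2 P => simp only [cd]; exact .proj1 ihM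
  | @proj2 M M' hM ihM =>
      cases M with
      | pair P Q B =>
          cases hM with
          | pair hP hQ hB =>
              simp only [cd] at ihM ⊢
              cases ihM with
              | pair ihP ihQ ihB => exact .pr2 ihQ
      | var n => simp only [cd]; exact .proj2 ihM
      | prop => simp only [cd]; exact .proj2 ihM
      | type j => simp only [cd]; exact .proj2 ihM
      | pi A B => simp only [cd]; exact .proj2 ihM
      | sigma A B => simp only [cd]; exact .proj2 ihM
      | lam A R => simp only [cd]; exact .proj2 ihM
      | app P Q => simp only [cd]; exact .proj2 ihM
      | proj1 P => simp only [cd]; exact .proj2 ihM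
      | proj2 P => simp only [cd]; exact .proj2 ihM
  | @beta M M' N N' A _ _ ihM ihN =>
      simp only [cd]
      exact par_subst0 ihM ihN
  | @pr1 M M' N B _ ihM => simp only [cd]; exact ihM
  | @pr2 N N' M B _ ihN => simp only [cd]; exact ihN
theorem mpar_mred : Relation.ReflTransGen Par M N → MRed M N := by
  intro h
  induction h with
  | refl => exact .refl
  | tail _ h2 ih => exact ih.trans (par_mred h2)

/-- Church–Rosser: convertible terms have a common reduct. -/
theorem conv_common_reduct : Conv M N → ∃ Z, MRed M Z ∧ MRed N Z := by
  intro h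
  have equiv : Equivalence (Relation.Join (Relation.ReflTransGen Par)) :=
    Relation.equivalence_join_reflTransGen
      (fun a b c hab hac =>
        ⟨cd a, Relation.ReflGen.single (triangle hab),
          Relation.ReflTransGen.single (triangle hac)⟩)
  have hj : Relation.Join (Relation.ReflTransGen Par) M N := by
    induction h with
    | rel a b hab => exact ⟨b, Relation.ReflTransGen.single (red_par hab), .refl⟩
    | refl a => exact equiv.refl a
    | symm a b _ ih => exact equiv.symm ih
    | trans a b c _ _ ih1 ih2 => exact equiv.trans ih1 ih2
  obtain ⟨Z, h1, h2⟩ := hj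
  exact ⟨Z, mpar_mred h1, mpar_mred h2⟩

theorem mred_conv : MRed M N → Conv M N := by
  intro h
  induction h with
  | refl => exact Relation.EqvGen.refl _
  | tail _ h2 ih => exact ih.trans _ _ _ (Relation.EqvGen.rel _ _ h2)

theorem mred_pi_inv : MRed (Term.pi A B) T →
    ∃ A' B', T = .pi A' B' ∧ MRed A A' ∧ MRed B B' := by
  intro h
  induction h with
  | refl => exact ⟨A, B, rfl, .refl, .refl⟩
  | tail _ h2 ih =>
      obtain ⟨A', B', rfl, hA, hB⟩ := ih
      cases h2 with
      | piL h => exact ⟨_, _, rfl, hA.tail h, hB⟩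
      | piR h => exact ⟨_, _, rfl, hA, hB.tail h⟩

theorem mred_sigma_inv : MRed (Term.sigma A B) T →
    ∃ A' B', T = .sigma A' B' ∧ MRed A A' ∧ MRed B B' := by
  intro h
  induction h with
  | refl => exact ⟨A, B, rfl, .refl, .refl⟩
  | tail _ h2 ih =>
      obtain ⟨A', B', rfl, hA, hB⟩ := ih
      cases h2 with
      | sigmaL h => exact ⟨_, _, rfl, hA.tail h, hB⟩
      | sigmaR h => exact ⟨_, _, rfl, hA, hB.tail h⟩

theorem mred_prop_inv : MRed Term.prop T → T = .prop := by
  intro h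
  induction h with
  | refl => rfl
  | tail _ h2 ih => subst ih; cases h2

theorem mred_type_inv : MRed (Term.type j) T → T = .type j := by
  intro h
  induction h with
  | refl => rfl
  | tail _ h2 ih => subst ih; cases h2

theorem conv_congr {f : Term → Term} (hf : ∀ x y, Red x y → Red (f x) (f y)) :
    Conv M N → Conv (f M) (f N) := by
  intro h
  induction h with
  | rel a b hab => exact Relation.EqvGen.rel _ _ (hf _ _ hab)
  | refl a => exact Relation.EqvGen.refl _
  | symm a b _ ih => exact ih.symm _ _
  | trans a b c _ _ ih1 ih2 => exact ih1.trans _ _ _ ih2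

end ECC

/-- convertibility of binder-headed types is componentwise:
`Qx:A.B ≃ Qx:A'.B'` iff `A ≃ A'` and `B ≃ B'` for `Q ∈ {Π,Σ}`; in particular a Π-type
is never convertible to a Σ-type or to a universe. -/
theorem conv_binder_componentwise :
    (∀ A B A' B' : ECC.Term,
      ECC.Conv (.pi A B) (.pi A' B') ↔ ECC.Conv A A' ∧ ECC.Conv B B') ∧
    (∀ A B A' B' : ECC.Term,
      ECC.Conv (.sigma A B) (.sigma A' B') ↔ ECC.Conv A A' ∧ ECC.Conv B B') ∧
    (∀ A B A' B' : ECC.Term, ¬ ECC.Conv (.pi A B) (.sigma A' B')) ∧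
    (∀ A B U : ECC.Term, ECC.IsUniv U → ¬ ECC.Conv (.pi A B) U) := by
  constructor
  · intro A B A' B'
    constructor
    · intro h
      obtain ⟨Z, h1, h2⟩ := ECC.conv_common_reduct h
      obtain ⟨A0, B0, rfl, hA1, hB1⟩ := ECC.mred_pi_inv h1
      obtain ⟨A0', B0', heq, hA2, hB2⟩ := ECC.mred_pi_inv h2
      cases heq
      exact ⟨(ECC.mred_conv hA1).trans _ _ _ ((ECC.mred_conv hA2).symm _ _),
        (ECC.mred_conv hB1).trans _ _ _ ((ECC.mred_conv hB2).symm _ _)⟩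
    · rintro ⟨hA, hB⟩
      exact (ECC.conv_congr (f := fun X => ECC.Term.pi X B)
          (fun _ _ h => .piL h) hA).trans _ _ _
        (ECC.conv_congr (f := fun X => ECC.Term.pi A' X) (fun _ _ h => .piR h) hB)
  refine ⟨?_, ?_, ?_⟩
  · intro A B A' B'
    constructor
    · intro h
      obtain ⟨Z, h1, h2⟩ := ECC.conv_common_reduct h
      obtain ⟨A0, B0, rfl, hA1, hB1⟩ := ECC.mred_sigma_inv h1
      obtain ⟨A0', B0', heq, hA2, hB2⟩ := ECC.mred_sigma_inv h2
      cases heq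
      exact ⟨(ECC.mred_conv hA1).trans _ _ _ ((ECC.mred_conv hA2).symm _ _),
        (ECC.mred_conv hB1).trans _ _ _ ((ECC.mred_conv hB2).symm _ _)⟩
    · rintro ⟨hA, hB⟩
      exact (ECC.conv_congr (f := fun X => ECC.Term.sigma X B)
          (fun _ _ h => .sigmaL h) hA).trans _ _ _
        (ECC.conv_congr (f := fun X => ECC.Term.sigma A' X) (fun _ _ h => .sigmaR h) hB)
  · intro A B A' B' h
    obtain ⟨Z, h1, h2⟩ := ECC.conv_common_reduct h
    obtain ⟨A0, B0, rfl, -, -⟩ := ECC.mred_pi_inv h1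
    obtain ⟨A0', B0', heq, -, -⟩ := ECC.mred_sigma_inv h2
    cases heq
  · rintro A B U (rfl | ⟨j, rfl⟩) h
    · obtain ⟨Z, h1, h2⟩ := ECC.conv_common_reduct h
      obtain ⟨A0, B0, rfl, -, -⟩ := ECC.mred_pi_inv h1
      cases ECC.mred_prop_inv h2
    · obtain ⟨Z, h1, h2⟩ := ECC.conv_common_reduct h
      obtain ⟨A0, B0, rfl, -, -⟩ := ECC.mred_pi_inv h1
      cases ECC.mred_type_inv h2
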